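/- Let k ≥ 1 and let 0 < p < 1. There exists N such that: if H = (V, E) is a hypergraph with |V| ≥ N, every hyperedge of H has size at least p|V|, and the intersection of any k distinct hyperedges has size at most k-1, then |E| < k / p^k. -/

import Mathlib

/-- Descending factorial lower bound: `(m-k)^k ≤ m!/(m-k)!`. -/
lemma aux_descFactorial_ge (m k : ℕ) : (m - k) ^ k ≤ m.descFactorial k := by
  rw [Nat.descFactorial_eq_prod_range]
  calc (m - k) ^ k = ∏ _i ∈ Finset.range k, (m - k) := by
        rw [Finset.prod_const, Finset.card_range]
    _ ≤ ∏ i ∈ Finset.range k, (m - i) := by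
        refine Finset.prod_le_prod' fun i hi => ?_
        exact Nat.sub_le_sub_left (le_of_lt (Finset.mem_range.mp hi)) m

/-- The combinatorial hypergraph lemma: for `k ≥ 1` and `0 < p < 1` there is a
threshold `N` such that any hypergraph on `n ≥ N` vertices whose hyperedges all
have size at least `p·n`, and in which any `k` distinct hyperedges intersect in
at most `k - 1` vertices, has fewer than `k / p^k` hyperedges. -/
theorem stmt8 (k : ℕ) (hk : 1 ≤ k) (p : ℝ) (hp0 : 0 < p) (hp1 : p < 1) :
    ∃ N : ℕ, ∀ n : ℕ, N ≤ n → ∀ E : Finset (Finset (Fin n)),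
      (∀ e ∈ E, p * n ≤ (e.card : ℝ)) →
      (∀ S : Finset (Finset (Fin n)), S ⊆ E → S.card = k →
        ((S.inf id).card ≤ k - 1)) →
      (E.card : ℝ) < k / p ^ k := by
  obtain ⟨N, hN⟩ := exists_nat_gt ((k : ℝ) ^ 3 / p)
  refine ⟨N, fun n hn E hsize hint => ?_⟩
  have hk1 : (1 : ℝ) ≤ (k : ℝ) := by exact_mod_cast hk
  have hpn : (k : ℝ) ^ 3 < p * n := by
    have h1 : (k : ℝ) ^ 3 / p < n := lt_of_lt_of_le hN (by exact_mod_cast hn)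
    rwa [div_lt_iff₀ hp0, mul_comm] at h1
  have hk3 : (k : ℝ) ≤ (k : ℝ) ^ 3 := by
    calc (k : ℝ) = (k : ℝ) ^ 1 := (pow_one _).symm
      _ ≤ (k : ℝ) ^ 3 := pow_le_pow_right₀ hk1 (by norm_num)
  have hpn0 : (0 : ℝ) < p * n := by nlinarith
  have hkpn : (k : ℝ) < p * n := lt_of_le_of_lt hk3 hpn
  -- the set of injective k-tuples
  set F : Finset (Fin k ↪ Fin n) := Finset.univ with hF
  -- Step A: each injective tuple is contained in at most k-1 edges
  have stepA : ∀ f : Fin k ↪ Fin n,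
      (E.filter (fun e => ∀ i, f i ∈ e)).card ≤ k - 1 := by
    intro f
    by_contra hcon
    push_neg at hcon
    have hk' : k ≤ (E.filter (fun e => ∀ i, f i ∈ e)).card := by omega
    obtain ⟨S, hSsub, hScard⟩ := Finset.exists_subset_card_eq hk'
    have hSE : S ⊆ E := hSsub.trans (Finset.filter_subset _ _)
    have h1 := hint S hSE hScard
    have h2 : (Finset.univ.image f : Finset (Fin n)) ≤ S.inf id := by
      refine Finset.le_inf fun e heS => ?_
      show (Finset.univ.image f : Finset (Fin n)) ⊆ e
      intro x hx
      obtain ⟨i, _, rfl⟩ := Finset.mem_image.mp hx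
      exact (Finset.mem_filter.mp (hSsub heS)).2 i
    have h3 : (Finset.univ.image f : Finset (Fin n)).card = k := by
      rw [Finset.card_image_of_injective _ f.injective, Finset.card_univ,
        Fintype.card_fin]
    have := Finset.card_le_card (show (Finset.univ.image f : Finset (Fin n)) ⊆ S.inf id from h2)
    omega
  -- Step C: each edge contains many injective tuples
  have stepC : ∀ e ∈ E,
      (e.card).descFactorial k ≤ (F.filter (fun f => ∀ i, f i ∈ e)).card := by
    intro e _
    have hcard : (Finset.univ : Finset (Fin k ↪ {x // x ∈ e})).card
        = e.card.descFactorial k := by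
      rw [Finset.card_univ, Fintype.card_embedding_eq, Fintype.card_fin,
        Fintype.card_coe]
    rw [← hcard]
    refine Finset.card_le_card_of_injOn
      (fun g => g.trans (Function.Embedding.subtype _)) (fun g _ => ?_) ?_
    · refine Finset.mem_filter.mpr ⟨Finset.mem_univ _, fun i => ?_⟩
      exact (g i).2
    · intro g _ g' _ h
      refine Function.Embedding.ext fun i => Subtype.coe_injective ?_
      have h2 := congrArg (fun (u : Fin k ↪ Fin n) => u i) h
      simpa using h2
  -- double counting
  have swap : ∑ e ∈ E, (F.filter (fun f => ∀ i, f i ∈ e)).card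
      = ∑ f ∈ F, (E.filter (fun e => ∀ i, f i ∈ e)).card := by
    simp_rw [Finset.card_filter]
    exact Finset.sum_comm
  have hFcard : F.card ≤ n ^ k := by
    rw [hF, Finset.card_univ, Fintype.card_embedding_eq, Fintype.card_fin,
      Fintype.card_fin]
    exact Nat.descFactorial_le_pow n k
  -- the key inequality over ℝ
  have key : (E.card : ℝ) * (p * n - k) ^ k ≤ ((k : ℝ) - 1) * (n : ℝ) ^ k := by
    have h1 : ∀ e ∈ E, (p * n - k) ^ k
        ≤ (((F.filter (fun f => ∀ i, f i ∈ e)).card : ℕ) : ℝ) := by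
      intro e he
      have hsz := hsize e he
      have hke : k ≤ e.card := by
        have : (k : ℝ) < (e.card : ℝ) := lt_of_lt_of_le hkpn hsz
        exact_mod_cast this.le
      have h2 : (p * n - k) ≤ ((e.card - k : ℕ) : ℝ) := by
        rw [Nat.cast_sub hke]
        linarith
      have h3 : (0 : ℝ) ≤ p * n - k := by linarith
      calc (p * n - k) ^ k ≤ (((e.card - k : ℕ) : ℝ)) ^ k :=
            pow_le_pow_left₀ h3 h2 k
        _ = (((e.card - k) ^ k : ℕ) : ℝ) := by push_cast; ring
        _ ≤ ((e.card.descFactorial k : ℕ) : ℝ) := by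
            exact_mod_cast aux_descFactorial_ge e.card k
        _ ≤ _ := by exact_mod_cast stepC e he
    calc (E.card : ℝ) * (p * n - k) ^ k
        = ∑ _e ∈ E, (p * n - k) ^ k := by rw [Finset.sum_const, nsmul_eq_mul]
      _ ≤ ∑ e ∈ E, (((F.filter (fun f => ∀ i, f i ∈ e)).card : ℕ) : ℝ) :=
          Finset.sum_le_sum h1
      _ = ((∑ e ∈ E, (F.filter (fun f => ∀ i, f i ∈ e)).card : ℕ) : ℝ) := by
          push_cast; ring
      _ = ((∑ f ∈ F, (E.filter (fun e => ∀ i, f i ∈ e)).card : ℕ) : ℝ) := by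
          rw [swap]
      _ ≤ (((k - 1) * F.card : ℕ) : ℝ) := by
          have : ∑ f ∈ F, (E.filter (fun e => ∀ i, f i ∈ e)).card
              ≤ ∑ _f ∈ F, (k - 1) := Finset.sum_le_sum fun f _ => stepA f
          rw [Finset.sum_const, smul_eq_mul, mul_comm] at this
          exact_mod_cast this
      _ ≤ (((k - 1) * n ^ k : ℕ) : ℝ) := by
          have : (k - 1) * F.card ≤ (k - 1) * n ^ k :=
            Nat.mul_le_mul_left _ hFcard
          exact_mod_cast this
      _ = ((k : ℝ) - 1) * (n : ℝ) ^ k := by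
          rw [Nat.cast_mul, Nat.cast_sub hk]
          push_cast; ring
  -- Bernoulli's inequality
  have hb : 1 - (k : ℝ) ^ 2 / (p * n) ≤ (1 - (k : ℝ) / (p * n)) ^ k := by
    have hx1 : (k : ℝ) / (p * n) ≤ 2 := by
      rw [div_le_iff₀ hpn0]; nlinarith
    have h := one_add_mul_le_pow (show (-2 : ℝ) ≤ -((k : ℝ) / (p * n)) by linarith) k
    rw [show (1 + -((k : ℝ) / (p * n))) = 1 - (k : ℝ) / (p * n) by ring] at h
    calc 1 - (k : ℝ) ^ 2 / (p * n) = 1 + (k : ℝ) * -((k : ℝ) / (p * n)) := by ring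
      _ ≤ _ := h
  -- key2 : (k-1) * n^k * p^k < k * (pn - k)^k
  have hfac : p * n - k = (p * n) * (1 - (k : ℝ) / (p * n)) := by
    rw [mul_sub, mul_one, mul_div_assoc', mul_div_right_comm, div_self hpn0.ne', one_mul]
  have hpnk : (0 : ℝ) < (p * n) ^ k := pow_pos hpn0 k
  have hlt1 : (k : ℝ) ^ 3 / (p * n) < 1 := (div_lt_one hpn0).mpr hpn
  have key2 : ((k : ℝ) - 1) * (n : ℝ) ^ k * p ^ k < k * (p * n - k) ^ k := by
    have e1 : ((k : ℝ) - 1) * (n : ℝ) ^ k * p ^ k = ((k : ℝ) - 1) * (p * n) ^ k := by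
      rw [mul_pow]; ring
    have e2 : (k : ℝ) * (p * n - k) ^ k
        = (k : ℝ) * ((p * n) ^ k * (1 - (k : ℝ) / (p * n)) ^ k) := by
      rw [hfac, mul_pow]
    rw [e1, e2]
    have h4 : (k : ℝ) * (1 - (k : ℝ) ^ 2 / (p * n)) ≤ (k : ℝ) * (1 - (k : ℝ) / (p * n)) ^ k :=
      mul_le_mul_of_nonneg_left hb (by linarith)
    have h5 : ((k : ℝ) - 1) < (k : ℝ) * (1 - (k : ℝ) ^ 2 / (p * n)) := by
      have : (k : ℝ) * ((k : ℝ) ^ 2 / (p * n)) = (k : ℝ) ^ 3 / (p * n) := by ring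
      nlinarith
    nlinarith
  -- conclude
  rw [lt_div_iff₀ (pow_pos hp0 k)]
  have hx : (0 : ℝ) < (p * n - k) ^ k := pow_pos (by linarith) k
  have h5 : (E.card : ℝ) * p ^ k * (p * n - k) ^ k < (k : ℝ) * (p * n - k) ^ k := by
    calc (E.card : ℝ) * p ^ k * (p * n - k) ^ k
        = ((E.card : ℝ) * (p * n - k) ^ k) * p ^ k := by ring
      _ ≤ (((k : ℝ) - 1) * (n : ℝ) ^ k) * p ^ k :=
          mul_le_mul_of_nonneg_right key (pow_nonneg hp0.le k)
      _ < (k : ℝ) * (p * n - k) ^ k := key2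
  exact lt_of_mul_lt_mul_right h5 hx.le
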